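/- For any integer k and nonnegative integer n, \sum_{m=0}^{n} (-1)^{n-m} \binom{n}{m} B_m^{(k-1)} = \sum_{m=0}^{n} (-1)^{n-m} \binom{n+1}{m} B_m^{(k)}, where B_m^{(k)} are the poly-Bernoulli numbers. -/

import Mathlib

open PowerSeries Finset Nat

/-- The formal power series `e^{-t}`. -/
noncomputable def expNeg : PowerSeries ℂ := PowerSeries.rescale (-1) (PowerSeries.exp ℂ)

/-- The generating function `Li_k(1-e^{-t})/(1-e^{-t}) = ∑_{m≥0} (1-e^{-t})^m/(m+1)^k`,
given coefficientwise (the sum truncates since `(1-e^{-t})^m` has order `≥ m`). -/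
noncomputable def polyBernoulliGF (k : ℤ) : PowerSeries ℂ :=
  PowerSeries.mk fun n => ∑ m ∈ Finset.range (n + 1),
    (((m : ℂ) + 1) ^ k)⁻¹ * PowerSeries.coeff (R := ℂ) n ((1 - expNeg) ^ m)

/-- The poly-Bernoulli polynomial `B_n^{(k)}(x)`, defined by
`Li_k(1-e^{-t})/(1-e^{-t}) · e^{xt} = ∑ B_n^{(k)}(x) tⁿ/n!`. -/
noncomputable def polyBernoulli (k : ℤ) (n : ℕ) (x : ℂ) : ℂ :=
  (n ! : ℂ) * PowerSeries.coeff (R := ℂ) n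
    (polyBernoulliGF k * PowerSeries.mk fun j => x ^ j / (j ! : ℂ))

/-- Stirling numbers of the second kind, via `(e^t-1)^m = m! ∑_{l} S₂(l,m) t^l/l!`. -/
noncomputable def stirling2 (l m : ℕ) : ℂ :=
  (l ! : ℂ) / (m ! : ℂ) * PowerSeries.coeff (R := ℂ) l ((PowerSeries.exp ℂ - 1) ^ m)

/-! ### Auxiliary lemmas -/

lemma coeff_expNeg (j : ℕ) : PowerSeries.coeff (R := ℂ) j expNeg = (-1) ^ j / (j ! : ℂ) := by
  rw [expNeg, coeff_rescale, coeff_exp, eq_ratCast]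
  push_cast
  ring

lemma constCoeff_one_sub_expNeg : PowerSeries.constantCoeff (R := ℂ) (1 - expNeg) = 0 := by
  have : PowerSeries.constantCoeff (R := ℂ) expNeg = 1 := by
    rw [← coeff_zero_eq_constantCoeff_apply, coeff_expNeg]; simp
  rw [map_sub, this]; simp

lemma coeff_pow_one_sub_expNeg_eq_zero {j m : ℕ} (h : j < m) :
    PowerSeries.coeff (R := ℂ) j ((1 - expNeg) ^ m) = 0 := by
  have hdvd : (PowerSeries.X : PowerSeries ℂ) ^ m ∣ (1 - expNeg) ^ m :=
    pow_dvd_pow_of_dvd (PowerSeries.X_dvd_iff.mpr constCoeff_one_sub_expNeg) m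
  exact PowerSeries.X_pow_dvd_iff.mp hdvd j h

/-- Truncation of the poly-Bernoulli generating function to the first `N` summands. -/
noncomputable def gfTrunc (k : ℤ) (N : ℕ) : PowerSeries ℂ :=
  ∑ m ∈ Finset.range N, PowerSeries.C (R := ℂ) (((m : ℂ) + 1) ^ k)⁻¹ * (1 - expNeg) ^ m

lemma coeff_gfTrunc {k : ℤ} {j N : ℕ} (h : j < N) :
    PowerSeries.coeff (R := ℂ) j (gfTrunc k N) = PowerSeries.coeff (R := ℂ) j (polyBernoulliGF k) := by
  rw [gfTrunc, polyBernoulliGF, coeff_mk, map_sum]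
  rw [← Finset.sum_subset (Finset.range_subset_range.mpr h)]
  · exact Finset.sum_congr rfl fun m _ => by rw [coeff_C_mul]
  · intro m hm hm'
    rw [coeff_C_mul, coeff_pow_one_sub_expNeg_eq_zero (by
      simp only [Finset.mem_range, not_lt] at hm'; omega), mul_zero]

lemma coeff_mul_congr {f f' g : PowerSeries ℂ} {n : ℕ}
    (h : ∀ j ≤ n, PowerSeries.coeff (R := ℂ) j f = PowerSeries.coeff (R := ℂ) j f') :
    PowerSeries.coeff (R := ℂ) n (g * f) = PowerSeries.coeff (R := ℂ) n (g * f') := by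
  rw [coeff_mul, coeff_mul]
  refine Finset.sum_congr rfl fun p hp => ?_
  rw [h p.2 (by
    have := Finset.HasAntidiagonal.antidiagonal.snd_le hp
    omega)]

lemma derivative_expNeg : d⁄dX ℂ expNeg = -expNeg := by
  ext n
  rw [coeff_derivative, map_neg, coeff_expNeg, coeff_expNeg, factorial_succ]
  have h1 : ((n ! : ℂ)) ≠ 0 := Nat.cast_ne_zero.mpr n.factorial_ne_zero
  have h2 : ((n : ℂ) + 1) ≠ 0 := Nat.cast_add_one_ne_zero n
  push_cast
  field_simp
  ring

lemma derivative_one_sub_expNeg : d⁄dX ℂ (1 - expNeg) = expNeg := by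
  rw [map_sub, derivative_expNeg, sub_neg_eq_add]
  have : d⁄dX ℂ (1 : PowerSeries ℂ) = 0 := by
    rw [← map_one (PowerSeries.C (R := ℂ)), PowerSeries.derivative_C]
  rw [this, zero_add]

lemma scalar_step (m : ℕ) (k : ℤ) :
    (((m : ℂ) + 1) ^ k)⁻¹ * ((m : ℂ) + 1) = (((m : ℂ) + 1) ^ (k - 1))⁻¹ := by
  have h : ((m : ℂ) + 1) ≠ 0 := Nat.cast_add_one_ne_zero m
  rw [← zpow_neg, ← zpow_neg, ← zpow_add_one₀ h]
  congr 1
  omega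

lemma term_step (k : ℤ) (m : ℕ) :
    expNeg * (PowerSeries.C (R := ℂ) (((m : ℂ) + 1) ^ (k - 1))⁻¹ * (1 - expNeg) ^ m) =
      expNeg * (PowerSeries.C (R := ℂ) (((m : ℂ) + 1) ^ k)⁻¹ * (1 - expNeg) ^ m) +
      (1 - expNeg) * d⁄dX ℂ (PowerSeries.C (R := ℂ) (((m : ℂ) + 1) ^ k)⁻¹ * (1 - expNeg) ^ m) := by
  have key : ((m : PowerSeries ℂ)) * ((1 - expNeg) * (1 - expNeg) ^ (m - 1)) =
      (m : PowerSeries ℂ) * (1 - expNeg) ^ m := by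
    cases m with
    | zero => simp
    | succ s => rw [Nat.add_sub_cancel, pow_succ]; ring
  have hc : (PowerSeries.C (R := ℂ)) (((m : ℂ) + 1) ^ (k - 1))⁻¹ =
      (PowerSeries.C (R := ℂ)) (((m : ℂ) + 1) ^ k)⁻¹ * ((m : PowerSeries ℂ) + 1) := by
    rw [← scalar_step m k, map_mul, map_add, map_natCast, map_one]
  rw [Derivation.leibniz, Derivation.leibniz_pow, derivative_one_sub_expNeg,
    PowerSeries.derivative_C, hc]
  simp only [smul_eq_mul, smul_zero, add_zero, nsmul_eq_mul]
  linear_combination (-((PowerSeries.C (R := ℂ)) (((m : ℂ) + 1) ^ k)⁻¹ * expNeg)) * key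

lemma gfTrunc_identity (k : ℤ) (N : ℕ) :
    expNeg * gfTrunc (k - 1) N =
      expNeg * gfTrunc k N + (1 - expNeg) * d⁄dX ℂ (gfTrunc k N) := by
  rw [gfTrunc, gfTrunc, map_sum, Finset.mul_sum, Finset.mul_sum, Finset.mul_sum,
    ← Finset.sum_add_distrib]
  exact Finset.sum_congr rfl fun m _ => term_step k m

lemma coeff_main (k : ℤ) (n : ℕ) :
    PowerSeries.coeff (R := ℂ) n (expNeg * polyBernoulliGF (k - 1)) =
      ((n : ℂ) + 1) * PowerSeries.coeff (R := ℂ) (n + 1) (polyBernoulliGF k) -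
      ((n : ℂ) + 1) * PowerSeries.coeff (R := ℂ) (n + 1) (expNeg * polyBernoulliGF k) := by
  have hT1 : PowerSeries.coeff (R := ℂ) n (expNeg * polyBernoulliGF (k - 1)) =
      PowerSeries.coeff (R := ℂ) n (expNeg * gfTrunc (k - 1) (n + 2)) :=
    (coeff_mul_congr fun j hj => coeff_gfTrunc (by omega)).symm
  have hT2 : PowerSeries.coeff (R := ℂ) n (expNeg * gfTrunc k (n + 2)) =
      PowerSeries.coeff (R := ℂ) n (expNeg * polyBernoulliGF k) :=
    coeff_mul_congr fun j hj => coeff_gfTrunc (by omega)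
  have hT3 : PowerSeries.coeff (R := ℂ) (n + 1) (expNeg * gfTrunc k (n + 2)) =
      PowerSeries.coeff (R := ℂ) (n + 1) (expNeg * polyBernoulliGF k) :=
    coeff_mul_congr fun j hj => coeff_gfTrunc (by omega)
  have hT4 : PowerSeries.coeff (R := ℂ) (n + 1) (gfTrunc k (n + 2)) =
      PowerSeries.coeff (R := ℂ) (n + 1) (polyBernoulliGF k) := coeff_gfTrunc (by omega)
  have hprod : expNeg * d⁄dX ℂ (gfTrunc k (n + 2)) =
      d⁄dX ℂ (expNeg * gfTrunc k (n + 2)) + expNeg * gfTrunc k (n + 2) := by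
    rw [Derivation.leibniz, derivative_expNeg, smul_eq_mul, smul_eq_mul]
    ring
  rw [hT1, gfTrunc_identity, map_add, sub_mul, one_mul, map_sub, hprod, map_add,
    coeff_derivative, coeff_derivative, hT2, hT3, hT4]
  ring

lemma sum_binom_coeff (f : PowerSeries ℂ) (n : ℕ) :
    ∑ m ∈ Finset.range (n + 1), (-1 : ℂ) ^ (n - m) * (n.choose m : ℂ) *
        ((m ! : ℂ) * PowerSeries.coeff (R := ℂ) m f) =
      (n ! : ℂ) * PowerSeries.coeff (R := ℂ) n (expNeg * f) := by
  rw [coeff_mul, Finset.Nat.sum_antidiagonal_eq_sum_range_succ_mk, Finset.mul_sum,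
    ← Finset.sum_range_reflect]
  refine Finset.sum_congr rfl fun j hj => ?_
  have hj' : j ≤ n := Nat.lt_succ_iff.mp (Finset.mem_range.mp hj)
  have h0 : n + 1 - 1 - j = n - j := by omega
  have h1 : n - (n - j) = j := by omega
  rw [h0, h1, coeff_expNeg, Nat.choose_symm hj']
  have h2 : (n.choose j : ℂ) * (j ! : ℂ) * ((n - j)! : ℂ) = (n ! : ℂ) := by
    exact_mod_cast congrArg (Nat.cast (R := ℂ)) (Nat.choose_mul_factorial_mul_factorial hj')
  have hj0 : (j ! : ℂ) ≠ 0 := Nat.cast_ne_zero.mpr j.factorial_ne_zero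
  field_simp
  linear_combination (PowerSeries.coeff (R := ℂ) (n - j) f) * h2

lemma exp_zero_series : (PowerSeries.mk fun j => (0 : ℂ) ^ j / (j ! : ℂ)) = 1 := by
  ext j
  rw [coeff_mk]
  cases j with
  | zero => simp
  | succ i => simp [coeff_one]

lemma polyBernoulli_zero (k : ℤ) (m : ℕ) :
    polyBernoulli k m 0 = (m ! : ℂ) * PowerSeries.coeff (R := ℂ) m (polyBernoulliGF k) := by
  rw [polyBernoulli, exp_zero_series, mul_one]

theorem polyBernoulli_number_identity (k : ℤ) (n : ℕ) :
    ∑ m ∈ Finset.range (n + 1),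
        (-1 : ℂ) ^ (n - m) * (n.choose m : ℂ) * polyBernoulli (k - 1) m 0 =
      ∑ m ∈ Finset.range (n + 1),
        (-1 : ℂ) ^ (n - m) * ((n + 1).choose m : ℂ) * polyBernoulli k m 0 := by
  simp only [polyBernoulli_zero]
  rw [sum_binom_coeff (polyBernoulliGF (k - 1)) n]
  have h := sum_binom_coeff (polyBernoulliGF k) (n + 1)
  rw [Finset.sum_range_succ] at h
  simp only [Nat.sub_self, pow_zero, Nat.choose_self, Nat.cast_one, one_mul] at h
  have hre : ∀ m ∈ Finset.range (n + 1),
      (-1 : ℂ) ^ (n - m) * (((n + 1).choose m : ℂ)) *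
        ((m ! : ℂ) * PowerSeries.coeff (R := ℂ) m (polyBernoulliGF k)) =
      -((-1 : ℂ) ^ (n + 1 - m) * (((n + 1).choose m : ℂ)) *
        ((m ! : ℂ) * PowerSeries.coeff (R := ℂ) m (polyBernoulliGF k))) := by
    intro m hm
    have hmn : n + 1 - m = (n - m) + 1 := by
      have := Finset.mem_range.mp hm; omega
    rw [hmn, pow_succ]; ring
  rw [Finset.sum_congr rfl hre, Finset.sum_neg_distrib]
  have hcm := coeff_main k n
  have hfac : ((n + 1)! : ℂ) = ((n : ℂ) + 1) * (n ! : ℂ) := by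
    push_cast [factorial_succ]; ring
  linear_combination (n ! : ℂ) * hcm + h -
    (PowerSeries.coeff (R := ℂ) (n + 1) (polyBernoulliGF k) -
      PowerSeries.coeff (R := ℂ) (n + 1) (expNeg * polyBernoulliGF k)) * hfac
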